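/- Let β₁ be a real number, and let V, T, V_S, T_S be random variables such that V_S is conditionally independent of T given V, and T_S is conditionally independent of V given T. Then the modality-invariant objective satisfies the identity −(I(T;V_S) + I(V;T_S)) + β₁(I(V;V_S|T) + I(T;T_S|V)) = −(1+β₁)(I(T;V_S) + I(V;T_S)) + β₁(I(V;V_S) + I(T;T_S)); that is, the objective L_S is equal to an information-bottleneck objective expressed without conditional mutual information terms. -/

import Mathlib

open MeasureTheory ProbabilityTheory

namespace DisNCL

variable {Ω : Type*} [MeasurableSpace Ω]

/-- The probability that a random variable `X` takes the value `x`. -/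
noncomputable def pr {S : Type*} (μ : Measure Ω) (X : Ω → S) (x : S) : ℝ :=
  (μ {ω | X ω = x}).toReal

/-- Shannon entropy `H(X)` of a finitely-valued random variable. -/
noncomputable def H {S : Type*} [Fintype S] (μ : Measure Ω) (X : Ω → S) : ℝ :=
  -∑ x, pr μ X x * Real.log (pr μ X x)

/-- Conditional entropy `H(X | Y) = ∑ y P(Y = y) H(X | Y = y)`, where the inner entropy
is taken under the conditional measure given `Y = y`. -/
noncomputable def condH {S T : Type*} [Fintype S] [Fintype T]
    (μ : Measure Ω) (X : Ω → S) (Y : Ω → T) : ℝ :=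
  ∑ y, pr μ Y y * H (ProbabilityTheory.cond μ {ω | Y ω = y}) X

/-- Mutual information `I(X;Y) = H(X) + H(Y) - H(X,Y)`. -/
noncomputable def MI {S T : Type*} [Fintype S] [Fintype T]
    (μ : Measure Ω) (X : Ω → S) (Y : Ω → T) : ℝ :=
  H μ X + H μ Y - H μ (fun ω => (X ω, Y ω))

/-- Conditional mutual information `I(X;Y|Z) = ∑ z P(Z = z) I(X;Y | Z = z)`, where the
inner mutual information is taken under the conditional measure given `Z = z`. -/
noncomputable def CMI {S T U : Type*} [Fintype S] [Fintype T] [Fintype U]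
    (μ : Measure Ω) (X : Ω → S) (Y : Ω → T) (Z : Ω → U) : ℝ :=
  ∑ z, pr μ Z z * MI (ProbabilityTheory.cond μ {ω | Z ω = z}) X Y

/-- `X` and `Y` are conditionally independent given `Z`
(written `X ⊥ Y | Z`): for all values,
`P(X = x, Y = y, Z = z) ⬝ P(Z = z) = P(X = x, Z = z) ⬝ P(Y = y, Z = z)`. -/
def CondIndep {S T U : Type*} (μ : Measure Ω) (X : Ω → S) (Y : Ω → T) (Z : Ω → U) : Prop :=
  ∀ (x : S) (y : T) (z : U),
    pr μ (fun ω => (X ω, Y ω, Z ω)) (x, y, z) * pr μ Z z =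
      pr μ (fun ω => (X ω, Z ω)) (x, z) * pr μ (fun ω => (Y ω, Z ω)) (y, z)

section Aux

variable {μ : Measure Ω}

lemma pr_nonneg {S : Type*} (X : Ω → S) (x : S) : 0 ≤ pr μ X x := ENNReal.toReal_nonneg

lemma pr_congr {S T : Type*} {X : Ω → S} {Y : Ω → T} {x : S} {y : T}
    (h : ∀ ω, X ω = x ↔ Y ω = y) : pr μ X x = pr μ Y y := by
  have hs : {ω | X ω = x} = {ω | Y ω = y} := Set.ext fun ω => h ω
  unfold pr
  rw [hs]

lemma sum_pr [IsFiniteMeasure μ] {S T : Type*} [Fintype S]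
    [MeasurableSpace S] [MeasurableSingletonClass S]
    [MeasurableSpace T] [MeasurableSingletonClass T]
    {X : Ω → S} {W : Ω → T} (hX : Measurable X) (hW : Measurable W) (w : T) :
    ∑ x, pr μ (fun ω => (X ω, W ω)) (x, w) = pr μ W w := by
  have hset : {ω | W ω = w} = ⋃ x, {ω | (X ω, W ω) = (x, w)} := by
    ext ω; simp [Prod.ext_iff]
  have hmeas : ∀ x : S, MeasurableSet {ω | (X ω, W ω) = (x, w)} := by
    intro x
    have : {ω | (X ω, W ω) = (x, w)} = X ⁻¹' {x} ∩ W ⁻¹' {w} := by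
      ext ω; simp [Prod.ext_iff]
    rw [this]
    exact (hX (measurableSet_singleton x)).inter (hW (measurableSet_singleton w))
  have hdisj : Pairwise (Function.onFun Disjoint fun x : S => {ω | (X ω, W ω) = (x, w)}) := by
    intro a b hab
    refine Set.disjoint_left.mpr ?_
    intro ω ha hb
    apply hab
    have h1 : X ω = a := (Prod.ext_iff.mp ha).1
    have h2 : X ω = b := (Prod.ext_iff.mp hb).1
    exact h1 ▸ h2
  unfold pr
  rw [hset, measure_iUnion hdisj hmeas, tsum_fintype,
    ENNReal.toReal_sum (fun x _ => measure_ne_top μ _)]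

lemma pr_pair_le [IsFiniteMeasure μ] {S T : Type*} {X : Ω → S} {W : Ω → T} (x : S) (w : T) :
    pr μ (fun ω => (X ω, W ω)) (x, w) ≤ pr μ W w :=
  ENNReal.toReal_mono (measure_ne_top μ _)
    (measure_mono fun ω h => by
      simp only [Set.mem_setOf_eq, Prod.mk.injEq] at h ⊢
      exact h.2)

lemma pr_cond_mul [IsFiniteMeasure μ] {S U : Type*}
    [MeasurableSpace U] [MeasurableSingletonClass U]
    {Z : Ω → U} (hZ : Measurable Z) (z : U) (X : Ω → S) (x : S) :
    pr (ProbabilityTheory.cond μ {ω | Z ω = z}) X x * pr μ Z z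
      = pr μ (fun ω => (X ω, Z ω)) (x, z) := by
  have hs : MeasurableSet {ω | Z ω = z} := hZ (measurableSet_singleton z)
  have hinter : {ω | Z ω = z} ∩ {ω | X ω = x} = {ω | (X ω, Z ω) = (x, z)} := by
    ext ω; simp [Prod.ext_iff]; tauto
  unfold pr
  rw [ProbabilityTheory.cond_apply hs, hinter]
  by_cases h0 : μ {ω | Z ω = z} = 0
  · have hsub : μ {ω | (X ω, Z ω) = (x, z)} = 0 :=
      le_antisymm (h0 ▸ measure_mono (fun ω h => by
        simp only [Set.mem_setOf_eq, Prod.mk.injEq] at h ⊢; exact h.2)) zero_le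
    rw [h0, hsub]
    simp
  · have hne : (μ {ω | Z ω = z}).toReal ≠ 0 :=
      ENNReal.toReal_ne_zero.mpr ⟨h0, measure_ne_top μ _⟩
    rw [ENNReal.toReal_mul, ENNReal.toReal_inv]
    field_simp

lemma mul_log_mul (a b : ℝ) :
    (a * b) * Real.log (a * b) = b * (a * Real.log a) + (a * b) * Real.log b := by
  rcases eq_or_ne a 0 with ha | ha
  · simp [ha]
  rcases eq_or_ne b 0 with hb | hb
  · simp [hb]
  rw [Real.log_mul ha hb]; ring

lemma H_equiv {S S' : Type*} [Fintype S] [Fintype S'] (e : S ≃ S') (X : Ω → S)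
    {g : Ω → S'} (hg : ∀ ω, g ω = e (X ω)) : H μ g = H μ X := by
  have hge : g = fun ω => e (X ω) := funext hg
  subst hge
  unfold H
  congr 1
  rw [← Equiv.sum_comp e (fun s' => pr μ (fun ω => e (X ω)) s' *
      Real.log (pr μ (fun ω => e (X ω)) s'))]
  refine Finset.sum_congr rfl fun s _ => ?_
  have : pr μ (fun ω => e (X ω)) (e s) = pr μ X s :=
    pr_congr fun ω => by simp
  rw [this]

def rot3 (A B C : Type*) : (A × B × C) ≃ (C × A × B) where
  toFun p := (p.2.2, p.1, p.2.1)
  invFun p := (p.2.1, p.2.2, p.1)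
  left_inv p := rfl
  right_inv p := rfl

lemma H_swap {S T : Type*} [Fintype S] [Fintype T] (X : Ω → S) (Y : Ω → T) :
    H μ (fun ω => (X ω, Y ω)) = H μ (fun ω => (Y ω, X ω)) :=
  H_equiv (Equiv.prodComm T S) (fun ω => (Y ω, X ω))
    (g := fun ω => (X ω, Y ω)) (fun ω => rfl)

lemma H_rot3 {S T U : Type*} [Fintype S] [Fintype T] [Fintype U]
    (X : Ω → S) (Y : Ω → T) (Z : Ω → U) :
    H μ (fun ω => (Z ω, X ω, Y ω)) = H μ (fun ω => (X ω, Y ω, Z ω)) :=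
  H_equiv (rot3 S T U) (fun ω => (X ω, Y ω, Z ω))
    (g := fun ω => (Z ω, X ω, Y ω)) (fun ω => rfl)

lemma H_assoc {S T U : Type*} [Fintype S] [Fintype T] [Fintype U]
    (X : Ω → S) (Y : Ω → T) (Z : Ω → U) :
    H μ (fun ω => ((X ω, Y ω), Z ω)) = H μ (fun ω => (X ω, Y ω, Z ω)) :=
  (H_equiv (Equiv.prodAssoc S T U) (fun ω => ((X ω, Y ω), Z ω))
    (g := fun ω => (X ω, Y ω, Z ω)) (fun ω => rfl)).symm

lemma H_pair_eq [IsFiniteMeasure μ] {S U : Type*} [Fintype S] [Fintype U]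
    [MeasurableSpace S] [MeasurableSingletonClass S]
    [MeasurableSpace U] [MeasurableSingletonClass U]
    {X : Ω → S} {Z : Ω → U} (hX : Measurable X) (hZ : Measurable Z) :
    H μ (fun ω => (X ω, Z ω)) = H μ Z + condH μ X Z := by
  have key : ∀ z : U,
      ∑ x, pr μ (fun ω => (X ω, Z ω)) (x, z) *
          Real.log (pr μ (fun ω => (X ω, Z ω)) (x, z))
        = pr μ Z z * ∑ x, pr (ProbabilityTheory.cond μ {ω | Z ω = z}) X x *
              Real.log (pr (ProbabilityTheory.cond μ {ω | Z ω = z}) X x)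
          + pr μ Z z * Real.log (pr μ Z z) := by
    intro z
    have step : ∀ x : S,
        pr μ (fun ω => (X ω, Z ω)) (x, z) * Real.log (pr μ (fun ω => (X ω, Z ω)) (x, z))
          = pr μ Z z * (pr (ProbabilityTheory.cond μ {ω | Z ω = z}) X x *
              Real.log (pr (ProbabilityTheory.cond μ {ω | Z ω = z}) X x))
            + pr μ (fun ω => (X ω, Z ω)) (x, z) * Real.log (pr μ Z z) := by
      intro x
      conv_lhs => rw [← pr_cond_mul hZ z X x]
      conv_rhs => rw [← pr_cond_mul hZ z X x]
      exact mul_log_mul _ _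
    rw [Finset.sum_congr rfl fun x _ => step x, Finset.sum_add_distrib, ← Finset.mul_sum,
      ← Finset.sum_mul, sum_pr hX hZ z]
  unfold H condH
  rw [Fintype.sum_prod_type_right]
  rw [Finset.sum_congr rfl fun z _ => key z, Finset.sum_add_distrib]
  unfold H
  simp only [mul_neg]
  rw [Finset.sum_neg_distrib]
  ring

lemma condIndep_H [IsFiniteMeasure μ] {S T U : Type*}
    [Fintype S] [Fintype T] [Fintype U]
    [MeasurableSpace S] [MeasurableSingletonClass S]
    [MeasurableSpace T] [MeasurableSingletonClass T]
    [MeasurableSpace U] [MeasurableSingletonClass U]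
    {X : Ω → S} {Y : Ω → T} {Z : Ω → U}
    (hX : Measurable X) (hY : Measurable Y) (hZ : Measurable Z)
    (h : CondIndep μ X Y Z) :
    H μ (fun ω => (X ω, Y ω, Z ω)) + H μ Z
      = H μ (fun ω => (X ω, Z ω)) + H μ (fun ω => (Y ω, Z ω)) := by
  have mb : ∀ (y : T) (z : U), ∑ x, pr μ (fun ω => (X ω, Y ω, Z ω)) (x, y, z)
      = pr μ (fun ω => (Y ω, Z ω)) (y, z) := fun y z => sum_pr hX (hY.prodMk hZ) (y, z)
  have ma : ∀ (x : S) (z : U), ∑ y, pr μ (fun ω => (X ω, Y ω, Z ω)) (x, y, z)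
      = pr μ (fun ω => (X ω, Z ω)) (x, z) := by
    intro x z
    have e : ∀ y, pr μ (fun ω => (X ω, Y ω, Z ω)) (x, y, z)
        = pr μ (fun ω => (Y ω, X ω, Z ω)) (y, x, z) := fun y =>
      pr_congr fun ω => by simp only [Prod.mk.injEq]; tauto
    rw [Finset.sum_congr rfl fun y _ => e y]
    exact sum_pr hY (hX.prodMk hZ) (x, z)
  have mc : ∀ z : U, ∑ y, pr μ (fun ω => (Y ω, Z ω)) (y, z) = pr μ Z z :=
    fun z => sum_pr hY hZ z
  have md : ∀ z : U, ∑ x, pr μ (fun ω => (X ω, Z ω)) (x, z) = pr μ Z z :=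
    fun z => sum_pr hX hZ z
  have per : ∀ (x : S) (y : T) (z : U),
      pr μ (fun ω => (X ω, Y ω, Z ω)) (x, y, z) *
          Real.log (pr μ (fun ω => (X ω, Y ω, Z ω)) (x, y, z))
        = pr μ (fun ω => (X ω, Y ω, Z ω)) (x, y, z) *
              Real.log (pr μ (fun ω => (X ω, Z ω)) (x, z))
          + pr μ (fun ω => (X ω, Y ω, Z ω)) (x, y, z) *
              Real.log (pr μ (fun ω => (Y ω, Z ω)) (y, z))
          - pr μ (fun ω => (X ω, Y ω, Z ω)) (x, y, z) * Real.log (pr μ Z z) := by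
    intro x y z
    by_cases hp0 : pr μ (fun ω => (X ω, Y ω, Z ω)) (x, y, z) = 0
    · simp [hp0]
    · have hple : pr μ (fun ω => (X ω, Y ω, Z ω)) (x, y, z) ≤ pr μ Z z :=
        ENNReal.toReal_mono (measure_ne_top μ _)
          (measure_mono fun ω hω => by
            simp only [Set.mem_setOf_eq, Prod.mk.injEq] at hω ⊢
            exact hω.2.2)
      have hppos : 0 < pr μ (fun ω => (X ω, Y ω, Z ω)) (x, y, z) :=
        (pr_nonneg _ _).lt_of_ne (Ne.symm hp0)
      have hcpos : 0 < pr μ Z z := lt_of_lt_of_le hppos hple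
      have hid := (h x y z).symm
      have habpos : 0 < pr μ (fun ω => (X ω, Z ω)) (x, z) *
          pr μ (fun ω => (Y ω, Z ω)) (y, z) := hid ▸ mul_pos hppos hcpos
      have hapos : 0 < pr μ (fun ω => (X ω, Z ω)) (x, z) := by
        rcases (pr_nonneg (μ := μ) (fun ω => (X ω, Z ω)) (x, z)).lt_or_eq with h' | h'
        · exact h'
        · rw [← h'] at habpos; simp at habpos
      have hbpos : 0 < pr μ (fun ω => (Y ω, Z ω)) (y, z) := by
        rcases (pr_nonneg (μ := μ) (fun ω => (Y ω, Z ω)) (y, z)).lt_or_eq with h' | h'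
        · exact h'
        · rw [← h'] at habpos; simp at habpos
      have hpeq : pr μ (fun ω => (X ω, Y ω, Z ω)) (x, y, z)
          = pr μ (fun ω => (X ω, Z ω)) (x, z) * pr μ (fun ω => (Y ω, Z ω)) (y, z)
            / pr μ Z z := by
        rw [eq_div_iff hcpos.ne']
        linarith [hid]
      rw [hpeq, Real.log_div (by positivity) hcpos.ne', Real.log_mul hapos.ne' hbpos.ne']
      ring
  have H3 : H μ (fun ω => (X ω, Y ω, Z ω))
      = -∑ x, ∑ y, ∑ z, pr μ (fun ω => (X ω, Y ω, Z ω)) (x, y, z) *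
          Real.log (pr μ (fun ω => (X ω, Y ω, Z ω)) (x, y, z)) := by
    unfold H
    simp only [Fintype.sum_prod_type]
  have Ha : H μ (fun ω => (X ω, Z ω))
      = -∑ x, ∑ z, pr μ (fun ω => (X ω, Z ω)) (x, z) *
          Real.log (pr μ (fun ω => (X ω, Z ω)) (x, z)) := by
    unfold H
    simp only [Fintype.sum_prod_type]
  have Hb : H μ (fun ω => (Y ω, Z ω))
      = -∑ y, ∑ z, pr μ (fun ω => (Y ω, Z ω)) (y, z) *
          Real.log (pr μ (fun ω => (Y ω, Z ω)) (y, z)) := by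
    unfold H
    simp only [Fintype.sum_prod_type]
  have sum1 : ∑ x, ∑ y, ∑ z, pr μ (fun ω => (X ω, Y ω, Z ω)) (x, y, z) *
        Real.log (pr μ (fun ω => (X ω, Z ω)) (x, z))
      = ∑ x, ∑ z, pr μ (fun ω => (X ω, Z ω)) (x, z) *
          Real.log (pr μ (fun ω => (X ω, Z ω)) (x, z)) := by
    refine Finset.sum_congr rfl fun x _ => ?_
    rw [Finset.sum_comm]
    refine Finset.sum_congr rfl fun z _ => ?_
    rw [← Finset.sum_mul, ma x z]
  have sum2 : ∑ x, ∑ y, ∑ z, pr μ (fun ω => (X ω, Y ω, Z ω)) (x, y, z) *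
        Real.log (pr μ (fun ω => (Y ω, Z ω)) (y, z))
      = ∑ y, ∑ z, pr μ (fun ω => (Y ω, Z ω)) (y, z) *
          Real.log (pr μ (fun ω => (Y ω, Z ω)) (y, z)) := by
    rw [Finset.sum_comm]
    refine Finset.sum_congr rfl fun y _ => ?_
    rw [Finset.sum_comm]
    refine Finset.sum_congr rfl fun z _ => ?_
    rw [← Finset.sum_mul, mb y z]
  have sum3 : ∑ x, ∑ y, ∑ z, pr μ (fun ω => (X ω, Y ω, Z ω)) (x, y, z) *
        Real.log (pr μ Z z)
      = ∑ z, pr μ Z z * Real.log (pr μ Z z) := by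
    have step1 : ∀ x : S, ∑ y, ∑ z, pr μ (fun ω => (X ω, Y ω, Z ω)) (x, y, z) *
          Real.log (pr μ Z z)
        = ∑ z, pr μ (fun ω => (X ω, Z ω)) (x, z) * Real.log (pr μ Z z) := by
      intro x
      rw [Finset.sum_comm]
      refine Finset.sum_congr rfl fun z _ => ?_
      rw [← Finset.sum_mul, ma x z]
    rw [Finset.sum_congr rfl fun x _ => step1 x, Finset.sum_comm]
    refine Finset.sum_congr rfl fun z _ => ?_
    rw [← Finset.sum_mul, md z]
  have key : ∑ x, ∑ y, ∑ z, pr μ (fun ω => (X ω, Y ω, Z ω)) (x, y, z) *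
        Real.log (pr μ (fun ω => (X ω, Y ω, Z ω)) (x, y, z))
      = (∑ x, ∑ z, pr μ (fun ω => (X ω, Z ω)) (x, z) *
            Real.log (pr μ (fun ω => (X ω, Z ω)) (x, z)))
        + (∑ y, ∑ z, pr μ (fun ω => (Y ω, Z ω)) (y, z) *
            Real.log (pr μ (fun ω => (Y ω, Z ω)) (y, z)))
        - ∑ z, pr μ Z z * Real.log (pr μ Z z) := by
    calc ∑ x, ∑ y, ∑ z, pr μ (fun ω => (X ω, Y ω, Z ω)) (x, y, z) *
          Real.log (pr μ (fun ω => (X ω, Y ω, Z ω)) (x, y, z))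
        = ∑ x, ∑ y, ∑ z,
            (pr μ (fun ω => (X ω, Y ω, Z ω)) (x, y, z) *
                Real.log (pr μ (fun ω => (X ω, Z ω)) (x, z))
              + pr μ (fun ω => (X ω, Y ω, Z ω)) (x, y, z) *
                Real.log (pr μ (fun ω => (Y ω, Z ω)) (y, z))
              - pr μ (fun ω => (X ω, Y ω, Z ω)) (x, y, z) * Real.log (pr μ Z z)) := by
          exact Finset.sum_congr rfl fun x _ => Finset.sum_congr rfl fun y _ =>
            Finset.sum_congr rfl fun z _ => per x y z
      _ = _ := by
          simp only [Finset.sum_sub_distrib, Finset.sum_add_distrib]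
          rw [sum1, sum2, sum3]
  rw [H3, Ha, Hb, key]
  unfold H
  ring

lemma CMI_eq [IsFiniteMeasure μ] {S T U : Type*}
    [Fintype S] [Fintype T] [Fintype U]
    [MeasurableSpace S] [MeasurableSingletonClass S]
    [MeasurableSpace T] [MeasurableSingletonClass T]
    [MeasurableSpace U] [MeasurableSingletonClass U]
    {X : Ω → S} {Y : Ω → T} {Z : Ω → U}
    (hX : Measurable X) (hY : Measurable Y) (hZ : Measurable Z) :
    CMI μ X Y Z = H μ (fun ω => (X ω, Z ω)) + H μ (fun ω => (Y ω, Z ω))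
      - H μ (fun ω => (X ω, Y ω, Z ω)) - H μ Z := by
  have expand : CMI μ X Y Z = condH μ X Z + condH μ Y Z
      - condH μ (fun ω => (X ω, Y ω)) Z := by
    unfold CMI MI condH
    rw [← Finset.sum_add_distrib, ← Finset.sum_sub_distrib]
    exact Finset.sum_congr rfl fun z _ => by ring
  have h1 : H μ (fun ω => (X ω, Z ω)) = H μ Z + condH μ X Z := H_pair_eq hX hZ
  have h2 : H μ (fun ω => (Y ω, Z ω)) = H μ Z + condH μ Y Z := H_pair_eq hY hZ
  have h3 : H μ (fun ω => ((X ω, Y ω), Z ω)) = H μ Z + condH μ (fun ω => (X ω, Y ω)) Z :=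
    H_pair_eq (hX.prodMk hY) hZ
  have h4 : H μ (fun ω => ((X ω, Y ω), Z ω)) = H μ (fun ω => (X ω, Y ω, Z ω)) :=
    H_assoc X Y Z
  rw [expand]
  linarith

end Aux

/-- If `V_S ⊥ T | V` and `T_S ⊥ V | T`, then the modality-invariant
objective `L_S = −(I(T;V_S) + I(V;T_S)) + β₁(I(V;V_S|T) + I(T;T_S|V))` equals the
information-bottleneck form `−(1+β₁)(I(T;V_S) + I(V;T_S)) + β₁(I(V;V_S) + I(T;T_S))`. -/
theorem modality_invariant_objective_eq_ib
    {SV ST SVS STS : Type*}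
    [Fintype SV] [Nonempty SV] [MeasurableSpace SV] [MeasurableSingletonClass SV]
    [Fintype ST] [Nonempty ST] [MeasurableSpace ST] [MeasurableSingletonClass ST]
    [Fintype SVS] [Nonempty SVS] [MeasurableSpace SVS] [MeasurableSingletonClass SVS]
    [Fintype STS] [Nonempty STS] [MeasurableSpace STS] [MeasurableSingletonClass STS]
    (β₁ : ℝ)
    (μ : Measure Ω) [IsProbabilityMeasure μ]
    (V : Ω → SV) (T : Ω → ST) (VS : Ω → SVS) (TS : Ω → STS)
    (hV : Measurable V) (hT : Measurable T) (hVS : Measurable VS) (hTS : Measurable TS)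
    (h1 : CondIndep μ VS T V) (h2 : CondIndep μ TS V T) :
    -(MI μ T VS + MI μ V TS) + β₁ * (CMI μ V VS T + CMI μ T TS V) =
      -(1 + β₁) * (MI μ T VS + MI μ V TS) + β₁ * (MI μ V VS + MI μ T TS) := by
  have e1 : CMI μ V VS T = H μ (fun ω => (V ω, T ω)) + H μ (fun ω => (VS ω, T ω))
      - H μ (fun ω => (V ω, VS ω, T ω)) - H μ T := CMI_eq hV hVS hT
  have e2 : CMI μ T TS V = H μ (fun ω => (T ω, V ω)) + H μ (fun ω => (TS ω, V ω))
      - H μ (fun ω => (T ω, TS ω, V ω)) - H μ V := CMI_eq hT hTS hV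
  have c1 : H μ (fun ω => (VS ω, T ω, V ω)) + H μ V
      = H μ (fun ω => (VS ω, V ω)) + H μ (fun ω => (T ω, V ω)) :=
    condIndep_H hVS hT hV h1
  have c2 : H μ (fun ω => (TS ω, V ω, T ω)) + H μ T
      = H μ (fun ω => (TS ω, T ω)) + H μ (fun ω => (V ω, T ω)) :=
    condIndep_H hTS hV hT h2
  have r1 : H μ (fun ω => (V ω, VS ω, T ω)) = H μ (fun ω => (VS ω, T ω, V ω)) :=
    H_rot3 VS T V
  have r2 : H μ (fun ω => (T ω, TS ω, V ω)) = H μ (fun ω => (TS ω, V ω, T ω)) :=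
    H_rot3 TS V T
  have s1 : H μ (fun ω => (VS ω, V ω)) = H μ (fun ω => (V ω, VS ω)) := H_swap VS V
  have s2 : H μ (fun ω => (T ω, V ω)) = H μ (fun ω => (V ω, T ω)) := H_swap T V
  have s3 : H μ (fun ω => (VS ω, T ω)) = H μ (fun ω => (T ω, VS ω)) := H_swap VS T
  have s4 : H μ (fun ω => (TS ω, T ω)) = H μ (fun ω => (T ω, TS ω)) := H_swap TS T
  have s5 : H μ (fun ω => (TS ω, V ω)) = H μ (fun ω => (V ω, TS ω)) := H_swap TS V
  have k1 : CMI μ V VS T = MI μ V VS - MI μ T VS := by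
    unfold MI
    linarith
  have k2 : CMI μ T TS V = MI μ T TS - MI μ V TS := by
    unfold MI
    linarith
  rw [k1, k2]
  ring


end DisNCL
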